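/- For every real L > 0 and every real κ ≥ −1/4, ∫_0^∞ (1/t) · (e^{−t/4}/√(4πt)) · (L/(2·sinh(L/2))) · e^{−L²/(4t)} · e^{−κt} dt = e^{(1/2 − √(1/4+κ))·L} / (e^{L} − 1). -/

import Mathlib

open Real MeasureTheory Set

-- image lemmas
lemma img_sq : (fun s : ℝ => s ^ 2) '' Set.Ioi 0 = Set.Ioi (0:ℝ) := by
  ext x; constructor
  · rintro ⟨s, hs, rfl⟩; exact pow_pos (show (0:ℝ) < s from hs) 2
  · intro hx; exact ⟨Real.sqrt x, Real.sqrt_pos.2 hx, Real.sq_sqrt hx.le⟩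

lemma inj_sq : Set.InjOn (fun s : ℝ => s ^ 2) (Set.Ioi 0) := by
  intro x hx y hy h
  simp only [Set.mem_Ioi] at hx hy
  simp only at h
  nlinarith

lemma der_sq : ∀ s ∈ Set.Ioi (0:ℝ), HasDerivWithinAt (fun s : ℝ => s ^ 2) (2 * s) (Set.Ioi 0) s := by
  intro s _
  simpa using (hasDerivAt_pow 2 s).hasDerivWithinAt
open Real MeasureTheory Set

-- gaussian over Iio 0
lemma gauss_Iio : ∫ x in Set.Iio (0:ℝ), Real.exp (-x ^ 2) = Real.sqrt π / 2 := by
  have h0 : ∫ x in Set.Iio (0:ℝ), Real.exp (-x ^ 2) = ∫ x in Set.Iic (0:ℝ), Real.exp (-x ^ 2) :=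
    (MeasureTheory.integral_Iic_eq_integral_Iio).symm
  have h1 : ∫ x in Set.Ioi (0:ℝ), Real.exp (-(-x) ^ 2) = ∫ x in Set.Iic (-(0:ℝ)), Real.exp (-x ^ 2) :=
    integral_comp_neg_Ioi 0 (fun x => Real.exp (-x ^ 2))
  have h2 : ∫ x in Set.Ioi (0:ℝ), Real.exp (-x ^ 2) = Real.sqrt π / 2 := by
    have := integral_gaussian_Ioi (1:ℝ)
    simpa using this
  rw [h0, ← show (-(0:ℝ)) = 0 by ring, ← h1]
  simp only [neg_sq]
  exact h2
open Real MeasureTheory Set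

lemma half (a b : ℝ) (ha : 0 ≤ a) (hb : 0 < b) :
    ∫ s in Set.Ioi (0:ℝ),
        Real.sqrt b * Real.exp (-(Real.sqrt a * s - Real.sqrt b / s) ^ 2) / s ^ 2
      = Real.sqrt π / 2 := by
  set sa := Real.sqrt a with hsa
  set sb := Real.sqrt b with hsb
  have hsa0 : 0 ≤ sa := Real.sqrt_nonneg a
  have hsb0 : 0 < sb := Real.sqrt_pos.2 hb
  -- derivative of v
  have hder : ∀ s ∈ Set.Ioi (0:ℝ),
      HasDerivWithinAt (fun s : ℝ => sa * s - sb / s) (sa + sb / s ^ 2) (Set.Ioi 0) s := by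
    intro s hs
    have hs0 : s ≠ 0 := ne_of_gt hs
    have h1 : HasDerivAt (fun s : ℝ => sa * s - sb / s) (sa * 1 - sb * -(s ^ 2)⁻¹) s := by
      simpa [div_eq_mul_inv, Pi.sub_def] using
        (((hasDerivAt_id s).const_mul sa).sub ((hasDerivAt_inv hs0).const_mul sb))
    have he : sa * 1 - sb * -(s ^ 2)⁻¹ = sa + sb / s ^ 2 := by field_simp; ring
    rw [he] at h1
    exact h1.hasDerivWithinAt
  have hinj : Set.InjOn (fun s : ℝ => sa * s - sb / s) (Set.Ioi 0) := by
    intro x hx y hy h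
    simp only [Set.mem_Ioi] at hx hy
    simp only at h
    have hx0 : x ≠ 0 := ne_of_gt hx
    have hy0 : y ≠ 0 := ne_of_gt hy
    field_simp at h
    have key : (x - y) * (sa * (x * y) + sb) = 0 := by linear_combination h
    have hpos : 0 < sa * (x * y) + sb := by positivity
    rcases mul_eq_zero.1 key with h1 | h2
    · linarith
    · linarith
  have hsub := MeasureTheory.integral_image_eq_integral_abs_deriv_smul measurableSet_Ioi hder hinj
      (fun x => Real.exp (-x ^ 2))
  -- pointwise: |v'| • exp(-(v s)^2) = f1 + f2 on Ioi 0
  have hptw : ∀ s ∈ Set.Ioi (0:ℝ),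
      |sa + sb / s ^ 2| • Real.exp (-(sa * s - sb / s) ^ 2)
        = sa * Real.exp (-(sa * s - sb / s) ^ 2)
          + sb * Real.exp (-(sa * s - sb / s) ^ 2) / s ^ 2 := by
    intro s hs
    simp only [Set.mem_Ioi] at hs
    have h1 : 0 ≤ sa + sb / s ^ 2 := by positivity
    rw [abs_of_nonneg h1, smul_eq_mul]
    ring
  rcases eq_or_lt_of_le ha with rfl | hapos
  · -- a = 0 case
    have hsa' : sa = 0 := Real.sqrt_zero
    have himg : (fun s : ℝ => sa * s - sb / s) '' Set.Ioi 0 = Set.Iio 0 := by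
      rw [hsa']
      ext x; constructor
      · rintro ⟨s, hs, rfl⟩
        simp only [Set.mem_Ioi] at hs
        simp only [Set.mem_Iio, zero_mul, zero_sub]
        exact neg_lt_zero.2 (by positivity)
      · intro hx
        simp only [Set.mem_Iio] at hx
        refine ⟨-sb / x, div_pos_of_neg_of_neg (by linarith) hx, ?_⟩
        have hx0 : x ≠ 0 := ne_of_lt hx
        field_simp
        ring
    rw [himg] at hsub
    rw [gauss_Iio] at hsub
    rw [MeasureTheory.setIntegral_congr_fun measurableSet_Ioi hptw] at hsub
    -- with sa = 0, first summand vanishes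
    have : ∀ s ∈ Set.Ioi (0:ℝ),
        sa * Real.exp (-(sa * s - sb / s) ^ 2) + sb * Real.exp (-(sa * s - sb / s) ^ 2) / s ^ 2
          = sb * Real.exp (-(sa * s - sb / s) ^ 2) / s ^ 2 := by
      intro s _; rw [hsa']; ring
    rw [MeasureTheory.setIntegral_congr_fun measurableSet_Ioi this] at hsub
    exact hsub.symm
  · -- a > 0 case
    have hsa1 : 0 < sa := Real.sqrt_pos.2 hapos
    have hsa0' : sa ≠ 0 := ne_of_gt hsa1
    have hsb0' : sb ≠ 0 := ne_of_gt hsb0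
    -- image of v is all of ℝ
    have himg : (fun s : ℝ => sa * s - sb / s) '' Set.Ioi 0 = Set.univ := by
      apply Set.eq_univ_of_forall
      intro y
      set d := Real.sqrt (y ^ 2 + 4 * (sa * sb)) with hd
      have hd2 : d ^ 2 = y ^ 2 + 4 * (sa * sb) := Real.sq_sqrt (by positivity)
      have hdy : |y| < d := by
        have h1 : |y| = Real.sqrt (y ^ 2) := (Real.sqrt_sq_eq_abs y).symm
        rw [h1, hd]
        apply Real.sqrt_lt_sqrt (sq_nonneg y)
        nlinarith [mul_pos hsa1 hsb0]
      have hyd : 0 < y + d := by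
        have := neg_abs_le y
        linarith
      refine ⟨(y + d) / (2 * sa), Set.mem_Ioi.2 (by positivity), ?_⟩
      have hs0 : (y + d) / (2 * sa) ≠ 0 := ne_of_gt (by positivity)
      simp only
      field_simp
      ring_nf
      nlinarith [hd2]
    rw [himg] at hsub
    rw [MeasureTheory.setIntegral_univ] at hsub
    have hgauss : (∫ x : ℝ, Real.exp (-x ^ 2)) = Real.sqrt π := by
      have := integral_gaussian (1 : ℝ)
      simpa using this
    rw [hgauss] at hsub
    -- total integrand is integrable on Ioi 0
    have hIexp : Integrable (fun x : ℝ => Real.exp (-x ^ 2)) := by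
      have : (fun x : ℝ => Real.exp (-x ^ 2)) = fun x : ℝ => Real.exp (-1 * x ^ 2) := by
        funext x; ring_nf
      rw [this]
      exact integrable_exp_neg_mul_sq one_pos
    have hItot : IntegrableOn
        (fun s : ℝ => |sa + sb / s ^ 2| • Real.exp (-(sa * s - sb / s) ^ 2)) (Set.Ioi 0) := by
      have := (MeasureTheory.integrableOn_image_iff_integrableOn_abs_deriv_smul
        measurableSet_Ioi hder hinj (fun x => Real.exp (-x ^ 2))).1
      rw [himg] at this
      exact this hIexp.integrableOn
    -- continuity of the pieces
    have hcv : ContinuousOn (fun s : ℝ => Real.exp (-(sa * s - sb / s) ^ 2)) (Set.Ioi 0) := by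
      apply Real.continuous_exp.comp_continuousOn
      apply ContinuousOn.neg
      apply ContinuousOn.pow
      exact (continuousOn_const.mul continuousOn_id).sub
        (continuousOn_const.div continuousOn_id (fun x hx => ne_of_gt hx))
    have hc1 : ContinuousOn (fun s : ℝ => sa * Real.exp (-(sa * s - sb / s) ^ 2)) (Set.Ioi 0) :=
      continuousOn_const.mul hcv
    have hc2 : ContinuousOn
        (fun s : ℝ => sb * Real.exp (-(sa * s - sb / s) ^ 2) / s ^ 2) (Set.Ioi 0) :=
      (continuousOn_const.mul hcv).div (continuousOn_id.pow 2)
        (fun x hx => pow_ne_zero 2 (ne_of_gt hx))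
    have hbd1 : ∀ᵐ s ∂(volume.restrict (Set.Ioi (0:ℝ))),
        ‖sa * Real.exp (-(sa * s - sb / s) ^ 2)‖
          ≤ ‖|sa + sb / s ^ 2| • Real.exp (-(sa * s - sb / s) ^ 2)‖ := by
      rw [MeasureTheory.ae_restrict_iff' measurableSet_Ioi]
      filter_upwards with s hs
      have hs' : (0:ℝ) < s := hs
      rw [hptw s hs]
      have e2 : 0 ≤ sb * Real.exp (-(sa * s - sb / s) ^ 2) / s ^ 2 := by positivity
      have e1 : 0 ≤ sa * Real.exp (-(sa * s - sb / s) ^ 2) := by positivity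
      rw [Real.norm_of_nonneg e1, Real.norm_of_nonneg (by linarith)]
      linarith
    have hbd2 : ∀ᵐ s ∂(volume.restrict (Set.Ioi (0:ℝ))),
        ‖sb * Real.exp (-(sa * s - sb / s) ^ 2) / s ^ 2‖
          ≤ ‖|sa + sb / s ^ 2| • Real.exp (-(sa * s - sb / s) ^ 2)‖ := by
      rw [MeasureTheory.ae_restrict_iff' measurableSet_Ioi]
      filter_upwards with s hs
      have hs' : (0:ℝ) < s := hs
      rw [hptw s hs]
      have e2 : 0 ≤ sb * Real.exp (-(sa * s - sb / s) ^ 2) / s ^ 2 := by positivity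
      have e1 : 0 ≤ sa * Real.exp (-(sa * s - sb / s) ^ 2) := by positivity
      rw [Real.norm_of_nonneg e2, Real.norm_of_nonneg (by linarith)]
      linarith
    have hI1 : IntegrableOn (fun s : ℝ => sa * Real.exp (-(sa * s - sb / s) ^ 2)) (Set.Ioi 0) :=
      MeasureTheory.Integrable.mono hItot (hc1.aestronglyMeasurable measurableSet_Ioi) hbd1
    have hI2 : IntegrableOn
        (fun s : ℝ => sb * Real.exp (-(sa * s - sb / s) ^ 2) / s ^ 2) (Set.Ioi 0) :=
      MeasureTheory.Integrable.mono hItot (hc2.aestronglyMeasurable measurableSet_Ioi) hbd2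
    -- split the total integral
    rw [MeasureTheory.setIntegral_congr_fun measurableSet_Ioi hptw] at hsub
    rw [MeasureTheory.integral_add hI1 hI2] at hsub
    -- symmetry: the two integrals are equal
    have hder2 : ∀ s ∈ Set.Ioi (0:ℝ),
        HasDerivWithinAt (fun s : ℝ => sb / (sa * s)) (sb / sa * -(s ^ 2)⁻¹) (Set.Ioi 0) s := by
      intro s hs
      have hs0 : s ≠ 0 := ne_of_gt hs
      have hfn : (fun y : ℝ => sb / (sa * y)) = fun y : ℝ => sb / sa * y⁻¹ := by
        funext y
        rw [div_eq_mul_inv, mul_inv, div_eq_mul_inv, mul_assoc]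
      rw [hfn]
      exact ((hasDerivAt_inv hs0).const_mul (sb / sa)).hasDerivWithinAt
    have hinj2 : Set.InjOn (fun s : ℝ => sb / (sa * s)) (Set.Ioi 0) := by
      intro x hx y hy h
      simp only [Set.mem_Ioi] at hx hy
      simp only at h
      have hx0 : x ≠ 0 := ne_of_gt hx
      have hy0 : y ≠ 0 := ne_of_gt hy
      field_simp at h
      tauto
    have himg2 : (fun s : ℝ => sb / (sa * s)) '' Set.Ioi 0 = Set.Ioi 0 := by
      ext x; constructor
      · rintro ⟨s, hs, rfl⟩
        simp only [Set.mem_Ioi] at hs ⊢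
        positivity
      · intro hx
        simp only [Set.mem_Ioi] at hx ⊢
        refine ⟨sb / (sa * x), Set.mem_Ioi.2 (by positivity), ?_⟩
        have hx0 : x ≠ 0 := ne_of_gt hx
        field_simp
    have hsym := MeasureTheory.integral_image_eq_integral_abs_deriv_smul measurableSet_Ioi
        hder2 hinj2 (fun s : ℝ => sa * Real.exp (-(sa * s - sb / s) ^ 2))
    rw [himg2] at hsym
    have hptw2 : ∀ s ∈ Set.Ioi (0:ℝ),
        |sb / sa * -(s ^ 2)⁻¹| •
            (sa * Real.exp (-(sa * (sb / (sa * s)) - sb / (sb / (sa * s))) ^ 2))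
          = sb * Real.exp (-(sa * s - sb / s) ^ 2) / s ^ 2 := by
      intro s hs
      simp only [Set.mem_Ioi] at hs
      have hs0 : s ≠ 0 := ne_of_gt hs
      have harg : sa * (sb / (sa * s)) - sb / (sb / (sa * s)) = -(sa * s - sb / s) := by
        field_simp
        ring
      rw [harg, neg_sq]
      have habs : |sb / sa * -(s ^ 2)⁻¹| = sb / sa * (s ^ 2)⁻¹ := by
        rw [mul_neg, abs_neg, abs_of_nonneg (by positivity)]
      rw [habs, smul_eq_mul]
      field_simp
    rw [MeasureTheory.setIntegral_congr_fun measurableSet_Ioi hptw2] at hsym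
    rw [hsym] at hsub
    linarith

lemma key_integral (a b : ℝ) (ha : 0 ≤ a) (hb : 0 < b) :
    ∫ t in Set.Ioi (0:ℝ), Real.exp (-(a * t) - b / t) / (t * Real.sqrt t)
      = Real.sqrt π / Real.sqrt b * Real.exp (-2 * Real.sqrt (a * b)) := by
  rw [← img_sq, MeasureTheory.integral_image_eq_integral_abs_deriv_smul
    measurableSet_Ioi der_sq inj_sq]
  have hsb0 : (0:ℝ) < Real.sqrt b := Real.sqrt_pos.2 hb
  have hptw : ∀ s ∈ Set.Ioi (0:ℝ),
      |2 * s| • (Real.exp (-(a * s ^ 2) - b / s ^ 2) / (s ^ 2 * Real.sqrt (s ^ 2)))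
        = 2 * Real.exp (-2 * Real.sqrt (a * b)) / Real.sqrt b *
          (Real.sqrt b * Real.exp (-(Real.sqrt a * s - Real.sqrt b / s) ^ 2) / s ^ 2) := by
    intro s hs
    simp only [Set.mem_Ioi] at hs
    have hs0 : s ≠ 0 := ne_of_gt hs
    have h1 : Real.sqrt (s ^ 2) = s := Real.sqrt_sq hs.le
    have h2 : (Real.sqrt a * s - Real.sqrt b / s) ^ 2
        = a * s ^ 2 - 2 * Real.sqrt (a * b) + b / s ^ 2 := by
      have e1 : Real.sqrt a ^ 2 = a := Real.sq_sqrt ha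
      have e2 : Real.sqrt b ^ 2 = b := Real.sq_sqrt hb.le
      have e3 : Real.sqrt a * Real.sqrt b = Real.sqrt (a * b) := (Real.sqrt_mul ha b).symm
      have : (Real.sqrt a * s - Real.sqrt b / s) ^ 2
          = Real.sqrt a ^ 2 * s ^ 2 - 2 * (Real.sqrt a * Real.sqrt b) + Real.sqrt b ^ 2 / s ^ 2 := by
        field_simp
        ring
      rw [this, e1, e2, e3]
    have h3 : -(a * s ^ 2) - b / s ^ 2
        = -(Real.sqrt a * s - Real.sqrt b / s) ^ 2 + -(2 * Real.sqrt (a * b)) := by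
      rw [h2]; ring
    rw [h1, h3, Real.exp_add, abs_of_nonneg (by positivity), smul_eq_mul]
    have hx : -(2 * Real.sqrt (a * b)) = -2 * Real.sqrt (a * b) := by ring
    rw [hx]
    field_simp
  rw [MeasureTheory.setIntegral_congr_fun measurableSet_Ioi hptw,
    MeasureTheory.integral_const_mul, half a b ha hb]
  field_simp

theorem stmt8 (L κ : ℝ) (hL : 0 < L) (hκ : -(1 / 4) ≤ κ) :
    (∫ t in Set.Ioi (0 : ℝ), (1 / t) * (Real.exp (-t / 4) / Real.sqrt (4 * π * t)) *
        (L / (2 * Real.sinh (L / 2))) * Real.exp (-L ^ 2 / (4 * t)) * Real.exp (-κ * t)) =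
      Real.exp ((1 / 2 - Real.sqrt (1 / 4 + κ)) * L) / (Real.exp L - 1) := by
  have ha : (0:ℝ) ≤ 1 / 4 + κ := by linarith
  have hb : (0:ℝ) < L ^ 2 / 4 := by positivity
  have hsinh : 0 < Real.sinh (L / 2) := Real.sinh_pos_iff.2 (by positivity)
  have hπ : (0:ℝ) < Real.sqrt π := Real.sqrt_pos.2 pi_pos
  set C := L / (2 * Real.sinh (L / 2)) with hC
  have hptw : ∀ t ∈ Set.Ioi (0:ℝ),
      (1 / t) * (Real.exp (-t / 4) / Real.sqrt (4 * π * t)) * C *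
          Real.exp (-L ^ 2 / (4 * t)) * Real.exp (-κ * t)
        = C / (2 * Real.sqrt π) *
          (Real.exp (-((1 / 4 + κ) * t) - (L ^ 2 / 4) / t) / (t * Real.sqrt t)) := by
    intro t ht
    simp only [Set.mem_Ioi] at ht
    have ht0 : t ≠ 0 := ne_of_gt ht
    have hst : (0:ℝ) < Real.sqrt t := Real.sqrt_pos.2 ht
    have h4 : Real.sqrt (4 * π * t) = 2 * Real.sqrt π * Real.sqrt t := by
      rw [show (4:ℝ) * π * t = (4 * π) * t by ring, Real.sqrt_mul (by positivity),
        Real.sqrt_mul (by norm_num : (0:ℝ) ≤ 4), show Real.sqrt 4 = 2 by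
          rw [show (4:ℝ) = 2 ^ 2 by norm_num, Real.sqrt_sq (by norm_num : (0:ℝ) ≤ 2)]]
    have hexp : Real.exp (-((1 / 4 + κ) * t) - (L ^ 2 / 4) / t)
        = Real.exp (-t / 4) * Real.exp (-L ^ 2 / (4 * t)) * Real.exp (-κ * t) := by
      rw [← Real.exp_add, ← Real.exp_add]
      congr 1
      field_simp
      ring
    rw [h4, hexp]
    field_simp
  rw [MeasureTheory.setIntegral_congr_fun measurableSet_Ioi hptw,
    MeasureTheory.integral_const_mul, key_integral _ _ ha hb]
  have hL2 : Real.sqrt (L ^ 2 / 4) = L / 2 := by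
    rw [show L ^ 2 / 4 = (L / 2) ^ 2 by ring, Real.sqrt_sq (by positivity)]
  have hab : Real.sqrt ((1 / 4 + κ) * (L ^ 2 / 4)) = Real.sqrt (1 / 4 + κ) * (L / 2) := by
    rw [Real.sqrt_mul ha, hL2]
  rw [hL2, hab]
  set s := Real.sqrt (1 / 4 + κ) with hs
  have step1 : C / (2 * Real.sqrt π) * (Real.sqrt π / (L / 2) * Real.exp (-2 * (s * (L / 2))))
      = Real.exp (-(s * L)) / (2 * Real.sinh (L / 2)) := by
    rw [show -2 * (s * (L / 2)) = -(s * L) by ring, hC]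
    field_simp
  rw [step1]
  have hE0 : Real.exp (L / 2) ≠ 0 := Real.exp_ne_zero _
  have h1 : 0 < 2 * Real.sinh (L / 2) := by positivity
  have h2 : 0 < Real.exp L - 1 := by
    have : (1:ℝ) < Real.exp L := by
      rw [← Real.exp_zero]
      exact Real.exp_lt_exp.2 hL
    linarith
  rw [div_eq_div_iff (ne_of_gt h1) (ne_of_gt h2)]
  have e1 : Real.exp L = Real.exp (L / 2) * Real.exp (L / 2) := by
    rw [← Real.exp_add]; congr 1; ring
  have e2 : Real.exp ((1 / 2 - s) * L) = Real.exp (L / 2) * Real.exp (-(s * L)) := by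
    rw [← Real.exp_add]; congr 1; ring
  have e3 : 2 * Real.sinh (L / 2) = Real.exp (L / 2) - (Real.exp (L / 2))⁻¹ := by
    rw [Real.sinh_eq, Real.exp_neg]; ring
  rw [e1, e2, e3]
  field_simp
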